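/- arXiv:2005.13839 — 2 statements merged into one kernel-verified Lean document; each statement's English description precedes it below -/
import Mathlib

section
/- Let α ≥ 1. Then for every t in the interval [1 − 1/√2, 1/√2], (1/(t^{α+1}(1−t)))·((1 − 2t²)/(2(α+1)) + (2t − 1)/(α+2)) ≤ 2^{α/2+1}/((√2−1)^α (α+1)(α+2)), with equality iff t = 1 − 1/√2. -/
theorem planar_power_max (α : ℝ) (hα : 1 ≤ α) :
    ∀ t ∈ Set.Icc (1 - 1 / Real.sqrt 2) (1 / Real.sqrt 2),
      (1 / (t ^ (α + 1) * (1 - t))) *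
          ((1 - 2 * t ^ 2) / (2 * (α + 1)) + (2 * t - 1) / (α + 2)) ≤
        2 ^ (α / 2 + 1) / ((Real.sqrt 2 - 1) ^ α * (α + 1) * (α + 2)) ∧
      ((1 / (t ^ (α + 1) * (1 - t))) *
          ((1 - 2 * t ^ 2) / (2 * (α + 1)) + (2 * t - 1) / (α + 2)) =
        2 ^ (α / 2 + 1) / ((Real.sqrt 2 - 1) ^ α * (α + 1) * (α + 2)) ↔
        t = 1 - 1 / Real.sqrt 2) := by
  have hs0 : (0:ℝ) < Real.sqrt 2 := Real.sqrt_pos.mpr (by norm_num)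
  set s := Real.sqrt 2 with hsdef
  have hs2 : s ^ 2 = 2 := Real.sq_sqrt (by norm_num)
  have hs1 : 1 < s := by nlinarith
  have hsne : s ≠ 0 := ne_of_gt hs0
  rintro t ⟨ht0, ht1⟩
  set t0 : ℝ := 1 - 1 / s with ht0def
  clear_value s
  have h1s1 : 1 / s < 1 := by rw [div_lt_one hs0]; exact hs1
  have ht0pos : (0:ℝ) < t0 := by rw [ht0def]; linarith
  have ht0ne : t0 ≠ 0 := ne_of_gt ht0pos
  have htpos : 0 < t := lt_of_lt_of_le ht0pos ht0
  have htlt1 : t < 1 := lt_of_le_of_lt ht1 h1s1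
  have h1t : 0 < 1 - t := by linarith
  have hA1 : (0:ℝ) < α + 1 := by linarith
  have hA2 : (0:ℝ) < α + 2 := by linarith
  have hαpos : (0:ℝ) < α := by linarith
  have ht0a : 0 < t0 ^ α := Real.rpow_pos_of_pos ht0pos α
  have hta : 0 < t ^ α := Real.rpow_pos_of_pos htpos α
  have htpow : t ^ (α + 1) = t ^ α * t := by
    rw [Real.rpow_add htpos, Real.rpow_one]
  have hD : 0 < t ^ (α + 1) * (1 - t) := by rw [htpow]; positivity
  have hE : 0 < t0 ^ α * ((α + 1) * (α + 2)) := by positivity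
  have hs1a : 0 < s - 1 := by linarith
  -- the quadratic relation satisfied by t0
  have ht0q : 2 * t0 ^ 2 - 4 * t0 + 1 = 0 := by
    rw [ht0def]
    have h : (1 / s) ^ 2 = 1 / 2 := by
      rw [div_pow, hs2]; norm_num
    nlinarith [h]
  clear_value t0
  -- rewrite RHS
  have hRHS : (2:ℝ) ^ (α / 2 + 1) / ((s - 1) ^ α * (α + 1) * (α + 2))
      = 2 / (t0 ^ α * ((α + 1) * (α + 2))) := by
    have h2a : (2:ℝ) ^ (α / 2 + 1) = s ^ α * 2 := by
      rw [Real.rpow_add (by norm_num : (0:ℝ) < 2), Real.rpow_one]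
      congr 1
      rw [hsdef, Real.sqrt_eq_rpow, ← Real.rpow_mul (by norm_num : (0:ℝ) ≤ 2)]
      congr 1
      ring
    have ht0val : t0 = (s - 1) / s := by
      rw [ht0def]; field_simp
    have ht0aval : t0 ^ α = (s - 1) ^ α / s ^ α := by
      rw [ht0val, Real.div_rpow hs1a.le hs0.le]
    have hsa : 0 < s ^ α := Real.rpow_pos_of_pos hs0 α
    have h1 : 0 < (s - 1) ^ α := Real.rpow_pos_of_pos hs1a α
    rw [h2a, ht0aval]
    field_simp
  set N : ℝ := (1 - 2 * t ^ 2) / (2 * (α + 1)) + (2 * t - 1) / (α + 2) with hN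
  set M : ℝ := (α + 2) * (1 - 2 * t ^ 2) / 2 + (α + 1) * (2 * t - 1) with hM
  have hNM : N * (t0 ^ α * ((α + 1) * (α + 2))) = t0 ^ α * M := by
    rw [hN, hM]; field_simp
  clear_value N M
  -- Bernoulli inequality in multiplied form
  have hber' : (t0 + α * (t - t0)) * t0 ^ α ≤ t ^ α * t0 := by
    have hy : (-1:ℝ) ≤ (t - t0) / t0 := by
      have h0 : 0 ≤ (t - t0) / t0 := by
        apply div_nonneg (by linarith) ht0pos.le
      linarith
    have hb0 := one_add_mul_self_le_rpow_one_add hy hα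
    have h1 : 1 + (t - t0) / t0 = t / t0 := by field_simp; ring
    rw [h1] at hb0
    have hdr : (t / t0) ^ α = t ^ α / t0 ^ α := Real.div_rpow htpos.le ht0pos.le α
    rw [hdr] at hb0
    have hb1 : (1 + α * ((t - t0) / t0)) * (t0 ^ α * t0) ≤ (t ^ α / t0 ^ α) * (t0 ^ α * t0) := by
      apply mul_le_mul_of_nonneg_right hb0 (by positivity)
    calc (t0 + α * (t - t0)) * t0 ^ α = (1 + α * ((t - t0) / t0)) * (t0 ^ α * t0) := by
          field_simp
      _ ≤ (t ^ α / t0 ^ α) * (t0 ^ α * t0) := hb1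
      _ = t ^ α * t0 := by field_simp
  -- the key algebraic identity
  have hiden : 2 * (t0 + α * (t - t0)) * (t * (1 - t)) - t0 * M
      = 2 * α * (t - t0) ^ 2 * (1 - t0 / 2 - t) := by
    rw [hM]; linear_combination (α * t0 / 2) * ht0q
  have hfac : 0 < 1 - t0 / 2 - t := by
    have h1 : t ≤ 1 - t0 := by rw [ht0def]; simpa using ht1
    linarith
  have hfin : t0 ^ α * M * t0 + t0 ^ α * (2 * α * (t - t0) ^ 2 * (1 - t0 / 2 - t))
      ≤ 2 * t ^ α * (t * (1 - t)) * t0 := by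
    have e1 : t0 ^ α * M * t0 + t0 ^ α * (2 * α * (t - t0) ^ 2 * (1 - t0 / 2 - t))
        = (2 * (t * (1 - t))) * ((t0 + α * (t - t0)) * t0 ^ α) := by
      linear_combination (-(t0 ^ α)) * hiden
    rw [e1]
    calc (2 * (t * (1 - t))) * ((t0 + α * (t - t0)) * t0 ^ α)
        ≤ (2 * (t * (1 - t))) * (t ^ α * t0) :=
          mul_le_mul_of_nonneg_left hber' (by positivity)
      _ = 2 * t ^ α * (t * (1 - t)) * t0 := by ring
  have hcentral : t0 ^ α * M ≤ 2 * t ^ α * (t * (1 - t)) := by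
    have hnn : 0 ≤ t0 ^ α * (2 * α * (t - t0) ^ 2 * (1 - t0 / 2 - t)) := by positivity
    have h1 : t0 ^ α * M * t0 ≤ 2 * t ^ α * (t * (1 - t)) * t0 := by linarith
    exact le_of_mul_le_mul_right h1 ht0pos
  have hcentral_strict : t0 < t → t0 ^ α * M < 2 * t ^ α * (t * (1 - t)) := by
    intro hlt
    have hsq : 0 < (t - t0) ^ 2 := pow_pos (by linarith) 2
    have hnn : 0 < t0 ^ α * (2 * α * (t - t0) ^ 2 * (1 - t0 / 2 - t)) :=
      mul_pos ht0a (mul_pos (mul_pos (by linarith : (0:ℝ) < 2 * α) hsq) hfac)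
    have h1 : t0 ^ α * M * t0 < 2 * t ^ α * (t * (1 - t)) * t0 := by linarith [hfin]
    exact lt_of_mul_lt_mul_right h1 ht0pos.le
  have hLform : (1 / (t ^ (α + 1) * (1 - t))) * N = N / (t ^ (α + 1) * (1 - t)) := by ring
  constructor
  · rw [hLform, hRHS, div_le_div_iff₀ hD hE, hNM, htpow]
    calc t0 ^ α * M ≤ 2 * t ^ α * (t * (1 - t)) := hcentral
      _ = 2 * (t ^ α * t * (1 - t)) := by ring
  · constructor
    · intro heq
      by_contra hne
      have hlt : t0 < t := lt_of_le_of_ne ht0 (Ne.symm hne)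
      rw [hLform, hRHS, div_eq_div_iff hD.ne' hE.ne', hNM, htpow] at heq
      have := hcentral_strict hlt
      linarith [this]
    · intro heq
      subst heq
      rw [hLform, hRHS, div_eq_div_iff hD.ne' hE.ne', hNM, htpow]
      have hMval : M = 2 * (t * (1 - t)) := by
        rw [hM]; linear_combination (-α / 2) * ht0q
      rw [hMval]; ring
end

section
/- With c > 0, m ∈ [−c, c], r_m = (c−m)/2 and t_m = (−(c−m) + √(c²+m²))/(2m) for m ≠ 0 (t_0 = 1/2), the map m ↦ t_m is a bijection from [−c, c] onto [1 − 1/√2, 1/√2]; in particular t_{−c} = 1 − 1/√2 and t_c = 1/√2. -/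
theorem tm_bijective (c : ℝ) (hc : 0 < c)
    (T : ℝ → ℝ)
    (hT : ∀ m, T m = if m = 0 then 1/2
      else (-(c - m) + Real.sqrt (c ^ 2 + m ^ 2)) / (2 * m)) :
    Set.BijOn T (Set.Icc (-c) c)
        (Set.Icc (1 - 1 / Real.sqrt 2) (1 / Real.sqrt 2)) ∧
      T (-c) = 1 - 1 / Real.sqrt 2 ∧ T c = 1 / Real.sqrt 2 := by
  set s : ℝ → ℝ := fun m => Real.sqrt (c ^ 2 + m ^ 2) with hs
  have hsq : ∀ m, s m ^ 2 = c ^ 2 + m ^ 2 := by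
    intro m
    exact Real.sq_sqrt (by positivity)
  have hsgt : ∀ m, |m| < s m := by
    intro m
    have : |m| = Real.sqrt (m ^ 2) := (Real.sqrt_sq_eq_abs m).symm
    rw [this, hs]
    exact Real.sqrt_lt_sqrt (by positivity) (by nlinarith)
  have hsgt' : ∀ m, m < s m := fun m => lt_of_le_of_lt (le_abs_self m) (hsgt m)
  have hsgt'' : ∀ m, -m < s m := fun m => lt_of_le_of_lt (neg_abs_le m |>.trans (le_abs_self m) |> fun _ => (neg_le_abs m)) (hsgt m)
  have hD : ∀ m, 0 < c - m + s m := by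
    intro m; have := hsgt' m; linarith
  have hTf : ∀ m, T m = c / (c - m + s m) := by
    intro m
    rw [hT m]
    by_cases hm : m = 0
    · subst hm
      have : s 0 = c := by
        rw [hs]; simp; rw [Real.sqrt_sq hc.le]
      simp [this]
      field_simp
      norm_num
    · simp [hm]
      have hD' := hD m
      have h2 := hsq m
      field_simp
      nlinarith [h2]
  have hmono : StrictMonoOn T (Set.Icc (-c) c) := by
    intro a _ b _ hab
    rw [hTf a, hTf b]
    have key : c - b + s b < c - a + s a := by
      -- s b - b < s a - a
      have h1 := hsq a
      have h2 := hsq b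
      have h3 := hsgt' a
      have h4 := hsgt' b
      have h5 := hsgt'' a
      have h6 := hsgt'' b
      nlinarith [mul_pos (hD a) (hD b), sq_nonneg (s a - s b), sq_nonneg (s a + s b)]
    exact div_lt_div_of_pos_left hc (hD b) key
  have hcontT : ContinuousOn T (Set.Icc (-c) c) := by
    have hfun : T = fun m => c / (c - m + s m) := funext hTf
    rw [hfun]
    apply Continuous.continuousOn
    apply continuous_const.div
    · exact (continuous_const.sub continuous_id).add
        (Real.continuous_sqrt.comp (by continuity))
    · exact fun m => (hD m).ne'
  have h2pos : (0:ℝ) < Real.sqrt 2 := Real.sqrt_pos.mpr (by norm_num)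
  have h2sq : Real.sqrt 2 ^ 2 = 2 := Real.sq_sqrt (by norm_num)
  have hTnc : T (-c) = 1 - 1 / Real.sqrt 2 := by
    rw [hTf]
    have : s (-c) = c * Real.sqrt 2 := by
      rw [hs]
      simp only
      rw [show c ^ 2 + (-c) ^ 2 = (c * Real.sqrt 2)^2 by nlinarith]
      exact Real.sqrt_sq (by positivity)
    rw [this]
    field_simp
    nlinarith
  have hTc : T c = 1 / Real.sqrt 2 := by
    rw [hTf]
    have : s c = c * Real.sqrt 2 := by
      rw [hs]
      simp only
      rw [show c ^ 2 + c ^ 2 = (c * Real.sqrt 2)^2 by nlinarith]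
      exact Real.sqrt_sq (by positivity)
    rw [this]
    rw [show c - c + c * Real.sqrt 2 = c * Real.sqrt 2 by ring]
    rw [div_eq_div_iff (by positivity) (by positivity)]
    ring
  have hmem : -c ∈ Set.Icc (-c) c := ⟨le_refl _, by linarith⟩
  have hmem' : c ∈ Set.Icc (-c) c := ⟨by linarith, le_refl _⟩
  refine ⟨⟨?_, hmono.injOn, ?_⟩, hTnc, hTc⟩
  · intro x hx
    constructor
    · rw [← hTnc]
      rcases eq_or_lt_of_le hx.1 with h | h
      · rw [h]
      · exact (hmono hmem hx h).le
    · rw [← hTc]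
      rcases eq_or_lt_of_le hx.2 with h | h
      · rw [h]
      · exact (hmono hx hmem' h).le
  · intro y hy
    have := intermediate_value_Icc (by linarith : -c ≤ c) hcontT
    rw [hTnc, hTc] at this
    exact this hy
end
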